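/- Let q ≥ 2 and suppose the tuples (φ₁, W₁, x₁, y₁, q) and (φ₂, W₂, x₂, y₂, q) represent q^n × q^m matrices M₁ and M₂ respectively, where W₁ : V₁ × {0,1} → F and W₂ : V₂ × {0,1} → F are weight functions into a field F with V₁ ∩ V₂ = ∅, WMC(⊤, W₁) ≠ 0, and WMC(⊤, W₂) ≠ 0. Let c be a fresh Boolean variable and x, y fresh strings of q-state encodings of lengths m and n whose variables are disjoint from V₁ ∪ V₂ and from each other. Define φ ≡ (¬c → ((x ↔ x₁) ∧ (y ↔ y₁) ∧ φ₁)) ∧ (c → ((x ↔ x₂) ∧ (y ↔ y₂) ∧ φ₂)), let W_c(c, 1) = 1/WMC(⊤, W₁), W_c(c, 0) = 1/WMC(⊤, W₂), and let W_{xy} be constantly 1 on var(x) ∪ var(y). Then the tuple (φ, W₁ ∪ W₂ ∪ W_c ∪ W_{xy}, x, y, q) represents the matrix sum M₁ + M₂. -/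

import Mathlib

/-- The weighted model count of a Boolean formula `φ` over a finite set of Boolean
variables `V` with respect to a weight function `W : V × Bool → F`:
`WMC(φ, W) = ∑_{τ ⊨ φ} ∏_{v ∈ V} W(v, τ(v))`. -/
def WMC {V : Type*} [Fintype V] [DecidableEq V] {F : Type*} [Field F]
    (φ : (V → Bool) → Bool) (W : V → Bool → F) : F :=
  ∑ τ : V → Bool, if φ τ then ∏ v : V, W v (τ v) else 0

/-- `enc` is a family of Boolean formulas (indexed by `ι`) forming a (string of)
`q`-state variable encoding(s) with variable set `vars`: each formula depends only on
the variables in `vars` and has exactly one satisfying assignment of `vars`, and the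
formulas for two distinct indices are mutually unsatisfiable. -/
def IsEncoding {V : Type*} {ι : Type*} (vars : Set V)
    (enc : ι → (V → Bool) → Bool) : Prop :=
  (∀ n : ι, ∃ σ : V → Bool, ∀ τ : V → Bool,
      (enc n τ = true ↔ ∀ v ∈ vars, τ v = σ v)) ∧
  (∀ n m : ι, n ≠ m → ∀ τ : V → Bool, ¬(enc n τ = true ∧ enc m τ = true))

/-- The tuple `(φ, W, x, y, q)` (with input string `x`, indexing the columns by `κ`,
and output string `y`, indexing the rows by `ι`) represents the matrix `M` iff
`M i j = WMC(φ ∧ (x = j) ∧ (y = i), W)` for all `i`, `j`. -/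
def Represents {V : Type*} [Fintype V] [DecidableEq V] {F : Type*} [Field F]
    {ι κ : Type*} (φ : (V → Bool) → Bool) (W : V → Bool → F)
    (x : κ → (V → Bool) → Bool) (y : ι → (V → Bool) → Bool)
    (M : Matrix ι κ F) : Prop :=
  ∀ (i : ι) (j : κ), M i j = WMC (fun τ => φ τ && x j τ && y i τ) W
lemma encoding_unique_assign {X : Type*} {ι : Type*} (x : ι → (X → Bool) → Bool)
    (h : IsEncoding (Set.univ : Set X) x) (j : ι) :
    ∃ σ : X → Bool, x j σ = true ∧ ∀ τ, x j τ = true ↔ τ = σ := by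
  obtain ⟨σ, hσ⟩ := h.1 j
  refine ⟨σ, (hσ σ).2 (fun v _ => rfl), fun τ => ⟨fun ht => funext fun v => (hσ τ).1 ht v trivial,
    fun ht => ht ▸ (hσ σ).2 (fun v _ => rfl)⟩⟩

lemma sum_eq_at {β : Type*} [Fintype β] {F : Type*} [AddCommMonoid F] (σ : β) (f : β → F)
    (h : ∀ τ, τ ≠ σ → f τ = 0) : ∑ τ, f τ = f σ :=
  Finset.sum_eq_single_of_mem σ (Finset.mem_univ σ) (fun τ _ => h τ)

/-- Matrix addition of WMC representations.  The two representations
live on disjoint variable sets `V₁`, `V₂`; the fresh input/output strings `x`, `y`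
live on fresh variable sets `X`, `Y`, and the fresh control variable `c` is the
`Unit` summand.  With
`φ ≡ (¬c → ((x ↔ x₁) ∧ (y ↔ y₁) ∧ φ₁)) ∧ (c → ((x ↔ x₂) ∧ (y ↔ y₂) ∧ φ₂))`,
the weights `W_c(c,1) = 1/WMC(⊤,W₁)`, `W_c(c,0) = 1/WMC(⊤,W₂)`, and constant weight
`1` on `var(x) ∪ var(y)`, the tuple `(φ, W₁ ∪ W₂ ∪ W_c ∪ W_{xy}, x, y, q)` represents
`M₁ + M₂`. -/
theorem matadd_represents {V₁ V₂ X Y : Type*}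
    [Fintype V₁] [DecidableEq V₁] [Fintype V₂] [DecidableEq V₂]
    [Fintype X] [DecidableEq X] [Fintype Y] [DecidableEq Y]
    {F : Type*} [Field F] {q m n : ℕ} (hq : 2 ≤ q)
    (φ₁ : (V₁ → Bool) → Bool) (φ₂ : (V₂ → Bool) → Bool)
    (W₁ : V₁ → Bool → F) (W₂ : V₂ → Bool → F)
    (x₁ : Fin (q ^ m) → (V₁ → Bool) → Bool) (y₁ : Fin (q ^ n) → (V₁ → Bool) → Bool)
    (x₂ : Fin (q ^ m) → (V₂ → Bool) → Bool) (y₂ : Fin (q ^ n) → (V₂ → Bool) → Bool)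
    (x₁vars y₁vars : Set V₁) (hx₁ : IsEncoding x₁vars x₁) (hy₁ : IsEncoding y₁vars y₁)
    (x₂vars y₂vars : Set V₂) (hx₂ : IsEncoding x₂vars x₂) (hy₂ : IsEncoding y₂vars y₂)
    (x : Fin (q ^ m) → (X → Bool) → Bool) (hx : IsEncoding (Set.univ : Set X) x)
    (y : Fin (q ^ n) → (Y → Bool) → Bool) (hy : IsEncoding (Set.univ : Set Y) y)
    (M₁ M₂ : Matrix (Fin (q ^ n)) (Fin (q ^ m)) F)
    (h₁ : Represents φ₁ W₁ x₁ y₁ M₁) (h₂ : Represents φ₂ W₂ x₂ y₂ M₂)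
    (hW₁ : WMC (fun _ : V₁ → Bool => true) W₁ ≠ 0)
    (hW₂ : WMC (fun _ : V₂ → Bool => true) W₂ ≠ 0) :
    Represents (V := (V₁ ⊕ V₂) ⊕ ((X ⊕ Y) ⊕ Unit))
      (fun τ =>
        (τ (Sum.inr (Sum.inr ())) ||
          (decide (∃ a : Fin (q ^ m),
              x a (fun v => τ (Sum.inr (Sum.inl (Sum.inl v)))) = true ∧
              x₁ a (fun v => τ (Sum.inl (Sum.inl v))) = true) &&
           decide (∃ a : Fin (q ^ n),
              y a (fun v => τ (Sum.inr (Sum.inl (Sum.inr v)))) = true ∧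
              y₁ a (fun v => τ (Sum.inl (Sum.inl v))) = true) &&
           φ₁ (fun v => τ (Sum.inl (Sum.inl v))))) &&
        (!(τ (Sum.inr (Sum.inr ()))) ||
          (decide (∃ a : Fin (q ^ m),
              x a (fun v => τ (Sum.inr (Sum.inl (Sum.inl v)))) = true ∧
              x₂ a (fun v => τ (Sum.inl (Sum.inr v))) = true) &&
           decide (∃ a : Fin (q ^ n),
              y a (fun v => τ (Sum.inr (Sum.inl (Sum.inr v)))) = true ∧
              y₂ a (fun v => τ (Sum.inl (Sum.inr v))) = true) &&
           φ₂ (fun v => τ (Sum.inl (Sum.inr v))))))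
      (Sum.elim (Sum.elim W₁ W₂)
        (Sum.elim (fun _ _ => (1 : F))
          (fun _ b => if b then (WMC (fun _ : V₁ → Bool => true) W₁)⁻¹
                      else (WMC (fun _ : V₂ → Bool => true) W₂)⁻¹)))
      (fun j τ => x j (fun v => τ (Sum.inr (Sum.inl (Sum.inl v)))))
      (fun i τ => y i (fun v => τ (Sum.inr (Sum.inl (Sum.inr v)))))
      (M₁ + M₂) := by
  intro i j
  classical
  obtain ⟨σX, hσXj, hσX⟩ := encoding_unique_assign x hx j
  obtain ⟨σY, hσYi, hσY⟩ := encoding_unique_assign y hy i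
  have hbij : Function.Bijective
      (fun p : ((V₁ → Bool) × (V₂ → Bool)) × (((X → Bool) × (Y → Bool)) × Bool) =>
        (Sum.elim (Sum.elim p.1.1 p.1.2)
          (Sum.elim (Sum.elim p.2.1.1 p.2.1.2) (fun _ => p.2.2)) :
          ((V₁ ⊕ V₂) ⊕ ((X ⊕ Y) ⊕ Unit)) → Bool)) := by
    constructor
    · rintro ⟨⟨a1,a2⟩,⟨⟨a3,a4⟩,a5⟩⟩ ⟨⟨b1,b2⟩,⟨⟨b3,b4⟩,b5⟩⟩ h
      simp only [Prod.mk.injEq]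
      exact ⟨⟨funext fun v => congrFun h (Sum.inl (Sum.inl v)),
              funext fun v => congrFun h (Sum.inl (Sum.inr v))⟩,
             ⟨funext fun v => congrFun h (Sum.inr (Sum.inl (Sum.inl v))),
              funext fun v => congrFun h (Sum.inr (Sum.inl (Sum.inr v)))⟩,
             congrFun h (Sum.inr (Sum.inr ()))⟩
    · intro τ
      refine ⟨⟨⟨fun v => τ (.inl (.inl v)), fun v => τ (.inl (.inr v))⟩,
        ⟨⟨fun v => τ (.inr (.inl (.inl v))), fun v => τ (.inr (.inl (.inr v)))⟩,
          τ (.inr (.inr ()))⟩⟩, ?_⟩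
      funext v
      rcases v with (v|v)|((v|v)|⟨⟩) <;> rfl
  rw [Matrix.add_apply, h₁ i j, h₂ i j]
  unfold WMC
  rw [← Fintype.sum_bijective _ hbij _ _ (fun p => rfl)]
  simp only [Fintype.sum_prod_type, Sum.elim_inl, Sum.elim_inr, Fintype.prod_sum_type,
    Finset.prod_const_one, one_mul, mul_one, Fintype.prod_unique, if_true]
  -- helper facts
  have hand : ∀ a b c : Bool, (a && b && c) = (c && a && b) := by decide
  have hT₁ne : (∑ σ : V₁ → Bool, ∏ v : V₁, W₁ v (σ v)) ≠ 0 := by simpa [WMC] using hW₁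
  have hT₂ne : (∑ σ : V₂ → Bool, ∏ v : V₂, W₂ v (σ v)) ≠ 0 := by simpa [WMC] using hW₂
  have huniqX : ∀ a : Fin (q ^ m), x a σX = true → a = j := by
    intro a ha; by_contra hne; exact hx.2 a j hne σX ⟨ha, hσXj⟩
  have huniqY : ∀ a : Fin (q ^ n), y a σY = true → a = i := by
    intro a ha; by_contra hne; exact hy.2 a i hne σY ⟨ha, hσYi⟩
  have hsumY : ∀ (g : (Y → Bool) → Bool) (w : F),
      (∑ τY : Y → Bool, if (g τY && y i τY) = true then w else 0)
        = if g σY = true then w else 0 := by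
    intro g w
    have h0 : ∀ τ : Y → Bool, τ ≠ σY → (if (g τ && y i τ) = true then w else 0) = 0 := by
      intro τ hτ
      have hyt : y i τ = false := by
        cases h : y i τ with
        | false => rfl
        | true => exact absurd ((hσY τ).mp h) hτ
      simp [hyt]
    rw [sum_eq_at σY _ h0, hσYi, Bool.and_true]
  have hsumX : ∀ (g : (X → Bool) → Bool) (w : F),
      (∑ τX : X → Bool, if (g τX && x j τX) = true then w else 0)
        = if g σX = true then w else 0 := by
    intro g w
    have h0 : ∀ τ : X → Bool, τ ≠ σX → (if (g τ && x j τ) = true then w else 0) = 0 := by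
      intro τ hτ
      have hxt : x j τ = false := by
        cases h : x j τ with
        | false => rfl
        | true => exact absurd ((hσX τ).mp h) hτ
      simp [hxt]
    rw [sum_eq_at σX _ h0, hσXj, Bool.and_true]
  simp only [Fintype.sum_bool, Bool.true_or, Bool.not_true, Bool.false_or, Bool.true_and,
    Bool.not_false, Bool.or_true, Bool.and_true, eq_self_iff_true, if_true,
    Bool.false_eq_true, if_false]
  simp only [Finset.sum_add_distrib]
  simp only [hsumY]
  simp only [hsumX]
  have hd1 : ∀ t : V₁ → Bool, ∀ inst : Decidable (∃ a : Fin (q ^ m),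
      (x a fun v => σX v) = true ∧ (x₁ a fun v => t v) = true), @decide _ inst = x₁ j t := by
    intro t inst
    cases hb : x₁ j t with
    | false =>
      simp only [decide_eq_false_iff_not]
      rintro ⟨a, ha, ha1⟩
      rw [huniqX a ha, hb] at ha1
      exact Bool.false_ne_true ha1
    | true => exact decide_eq_true ⟨j, hσXj, hb⟩
  have hd2 : ∀ t : V₁ → Bool, ∀ inst : Decidable (∃ a : Fin (q ^ n),
      (y a fun v => σY v) = true ∧ (y₁ a fun v => t v) = true), @decide _ inst = y₁ i t := by
    intro t inst
    cases hb : y₁ i t with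
    | false =>
      simp only [decide_eq_false_iff_not]
      rintro ⟨a, ha, ha1⟩
      rw [huniqY a ha, hb] at ha1
      exact Bool.false_ne_true ha1
    | true => exact decide_eq_true ⟨i, hσYi, hb⟩
  have hd3 : ∀ t : V₂ → Bool, ∀ inst : Decidable (∃ a : Fin (q ^ m),
      (x a fun v => σX v) = true ∧ (x₂ a fun v => t v) = true), @decide _ inst = x₂ j t := by
    intro t inst
    cases hb : x₂ j t with
    | false =>
      simp only [decide_eq_false_iff_not]
      rintro ⟨a, ha, ha1⟩
      rw [huniqX a ha, hb] at ha1
      exact Bool.false_ne_true ha1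
    | true => exact decide_eq_true ⟨j, hσXj, hb⟩
  have hd4 : ∀ t : V₂ → Bool, ∀ inst : Decidable (∃ a : Fin (q ^ n),
      (y a fun v => σY v) = true ∧ (y₂ a fun v => t v) = true), @decide _ inst = y₂ i t := by
    intro t inst
    cases hb : y₂ i t with
    | false =>
      simp only [decide_eq_false_iff_not]
      rintro ⟨a, ha, ha1⟩
      rw [huniqY a ha, hb] at ha1
      exact Bool.false_ne_true ha1
    | true => exact decide_eq_true ⟨i, hσYi, hb⟩
  have hp1 : ∀ t : V₁ → Bool, (∃ a : Fin (q ^ m),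
      (x a fun v => σX v) = true ∧ (x₁ a fun v => t v) = true) ↔ x₁ j t = true :=
    fun t => by rw [← hd1 t inferInstance]; exact decide_eq_true_iff.symm
  have hp2 : ∀ t : V₁ → Bool, (∃ a : Fin (q ^ n),
      (y a fun v => σY v) = true ∧ (y₁ a fun v => t v) = true) ↔ y₁ i t = true :=
    fun t => by rw [← hd2 t inferInstance]; exact decide_eq_true_iff.symm
  have hp3 : ∀ t : V₂ → Bool, (∃ a : Fin (q ^ m),
      (x a fun v => σX v) = true ∧ (x₂ a fun v => t v) = true) ↔ x₂ j t = true :=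
    fun t => by rw [← hd3 t inferInstance]; exact decide_eq_true_iff.symm
  have hp4 : ∀ t : V₂ → Bool, (∃ a : Fin (q ^ n),
      (y a fun v => σY v) = true ∧ (y₂ a fun v => t v) = true) ↔ y₂ i t = true :=
    fun t => by rw [← hd4 t inferInstance]; exact decide_eq_true_iff.symm
  simp only [hp1, hp2, hp3, hp4, Bool.decide_eq_true]
  have eA : (∑ τ₁ : V₁ → Bool, ∑ τ₂ : V₂ → Bool,
      if (x₂ j τ₂ && y₂ i τ₂ && φ₂ τ₂) = true then
        (∏ v : V₁, W₁ v (τ₁ v)) * (∏ v : V₂, W₂ v (τ₂ v)) *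
          (∑ σ : V₁ → Bool, ∏ v : V₁, W₁ v (σ v))⁻¹ else 0) =
      ∑ τ₂ : V₂ → Bool, if (φ₂ τ₂ && x₂ j τ₂ && y₂ i τ₂) = true
        then ∏ v : V₂, W₂ v (τ₂ v) else 0 := by
    have step1 : (∑ τ₁ : V₁ → Bool, ∑ τ₂ : V₂ → Bool,
        if (x₂ j τ₂ && y₂ i τ₂ && φ₂ τ₂) = true then
          (∏ v : V₁, W₁ v (τ₁ v)) * (∏ v : V₂, W₂ v (τ₂ v)) *
            (∑ σ : V₁ → Bool, ∏ v : V₁, W₁ v (σ v))⁻¹ else 0) =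
        ∑ τ₁ : V₁ → Bool, (∏ v : V₁, W₁ v (τ₁ v)) *
          ((∑ τ₂ : V₂ → Bool, if (φ₂ τ₂ && x₂ j τ₂ && y₂ i τ₂) = true
              then ∏ v : V₂, W₂ v (τ₂ v) else 0) *
            (∑ σ : V₁ → Bool, ∏ v : V₁, W₁ v (σ v))⁻¹) := by
      refine Finset.sum_congr rfl fun τ₁ _ => ?_
      rw [Finset.sum_mul, Finset.mul_sum]
      refine Finset.sum_congr rfl fun τ₂ _ => ?_
      rw [hand (x₂ j τ₂) (y₂ i τ₂) (φ₂ τ₂)]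
      by_cases hc : (φ₂ τ₂ && x₂ j τ₂ && y₂ i τ₂) = true
      · rw [if_pos hc, if_pos hc]; ring
      · rw [if_neg hc, if_neg hc, zero_mul, mul_zero]
    rw [step1, ← Finset.sum_mul,
      mul_comm (∑ τ₂ : V₂ → Bool, if (φ₂ τ₂ && x₂ j τ₂ && y₂ i τ₂) = true
          then ∏ v : V₂, W₂ v (τ₂ v) else 0),
      ← mul_assoc, mul_inv_cancel₀ hT₁ne, one_mul]
  have eB : (∑ τ₁ : V₁ → Bool, ∑ τ₂ : V₂ → Bool,
      if (x₁ j τ₁ && y₁ i τ₁ && φ₁ τ₁) = true then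
        (∏ v : V₁, W₁ v (τ₁ v)) * (∏ v : V₂, W₂ v (τ₂ v)) *
          (∑ σ : V₂ → Bool, ∏ v : V₂, W₂ v (σ v))⁻¹ else 0) =
      ∑ τ₁ : V₁ → Bool, if (φ₁ τ₁ && x₁ j τ₁ && y₁ i τ₁) = true
        then ∏ v : V₁, W₁ v (τ₁ v) else 0 := by
    refine Finset.sum_congr rfl fun τ₁ _ => ?_
    rw [hand (x₁ j τ₁) (y₁ i τ₁) (φ₁ τ₁)]
    by_cases hc : (φ₁ τ₁ && x₁ j τ₁ && y₁ i τ₁) = true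
    · rw [if_pos hc, Finset.sum_congr rfl fun τ₂ _ => if_pos hc]
      have h5 : (∑ τ₂ : V₂ → Bool, (∏ v : V₁, W₁ v (τ₁ v)) * (∏ v : V₂, W₂ v (τ₂ v)) *
            (∑ σ : V₂ → Bool, ∏ v : V₂, W₂ v (σ v))⁻¹)
          = ((∏ v : V₁, W₁ v (τ₁ v)) * (∑ σ : V₂ → Bool, ∏ v : V₂, W₂ v (σ v))) *
            (∑ σ : V₂ → Bool, ∏ v : V₂, W₂ v (σ v))⁻¹ := by
        rw [← Finset.sum_mul, ← Finset.mul_sum]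
      rw [h5, mul_assoc, mul_inv_cancel₀ hT₂ne, mul_one]
    · rw [if_neg hc, Finset.sum_congr rfl fun τ₂ _ => if_neg hc]
      exact Finset.sum_const_zero
  rw [eA, eB]
  exact add_comm _ _
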